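/- For any symplectic matrix S = [[A,B],[C,D]] ∈ Sp(2n, Z) with integer entries and any integer vector a = (a_X, a_Z) ∈ Z^{2n}, one has (S a)_X^T (S a)_Z ≡ a_X^T a_Z + t̄^T a (mod 2), where t̄ ∈ Z^{2n} is the vector of diagonal entries of the block-diagonal matrix diag(A^T C, B^T D). -/
import Mathlib


open Matrix

section Aux
open Finset

-- pairing lemma in char 2
lemma pair_sum {n : ℕ} (f : Fin n → Fin n → ZMod 2) (hf : ∀ i j, f i j = f j i) :
    ∑ i, ∑ j, f i j = ∑ i, f i i := by
  classical
  rw [← Finset.sum_product' (s := univ) (t := univ)]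
  rw [← Finset.diag_union_offDiag (univ : Finset (Fin n)),
    Finset.sum_union (Finset.disjoint_diag_offDiag _), Finset.sum_diag]
  have h0 : ∑ p ∈ (univ : Finset (Fin n)).offDiag, f p.1 p.2 = 0 := by
    refine Finset.sum_involution (fun p _ => Prod.swap p) ?_ ?_ ?_ ?_
    · intro a ha
      rw [hf]
      exact CharTwo.add_self_eq_zero _
    · intro a ha _
      have := (Finset.mem_offDiag.mp ha).2.2
      intro h
      exact this (by simpa using (congrArg Prod.fst h).symm)
    · intro a ha
      have h := Finset.mem_offDiag.mp ha
      exact Finset.mem_offDiag.mpr ⟨by simp, by simp, fun hh => h.2.2 (by simpa using hh.symm)⟩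
    · intro a ha; rfl
  rw [h0, add_zero]

lemma quad_mod_two {n : ℕ} (M : Matrix (Fin n) (Fin n) ℤ) (hM : Mᵀ = M) (x : Fin n → ℤ) :
    x ⬝ᵥ M.mulVec x ≡ ∑ i, M i i * x i [ZMOD 2] := by
  suffices h : ((x ⬝ᵥ M *ᵥ x : ℤ) : ZMod 2) = ((∑ i, M i i * x i : ℤ) : ZMod 2) by
    exact_mod_cast (ZMod.intCast_eq_intCast_iff _ _ 2).mp h
  push_cast [dotProduct, mulVec, Finset.mul_sum]
  rw [pair_sum (fun i j => (x i : ZMod 2) * ((M i j : ZMod 2) * (x j : ZMod 2)))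
      (fun i j => by
        have h : M i j = M j i := by conv_lhs => rw [← hM, transpose_apply]
        show (x i : ZMod 2) * ((M i j : ZMod 2) * (x j : ZMod 2))
            = (x j : ZMod 2) * ((M j i : ZMod 2) * (x i : ZMod 2))
        rw [h]; ring)]
  refine Finset.sum_congr rfl fun i _ => ?_
  have hsq : ∀ a : ZMod 2, a * a = a := by decide
  calc (x i : ZMod 2) * ((M i i : ZMod 2) * (x i : ZMod 2))
      = (M i i : ZMod 2) * ((x i : ZMod 2) * (x i : ZMod 2)) := by ring
    _ = (M i i : ZMod 2) * (x i : ZMod 2) := by rw [hsq]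

lemma dp_helper {n : ℕ} (M N : Matrix (Fin n) (Fin n) ℤ) (x y : Fin n → ℤ) :
    (M *ᵥ x) ⬝ᵥ (N *ᵥ y) = x ⬝ᵥ ((Mᵀ * N) *ᵥ y) := by
  rw [dotProduct_mulVec, vecMul_mulVec, ← dotProduct_mulVec]

end Aux

/-- For any integer symplectic matrix `S = [[A,B],[C,D]] ∈ Sp(2n,ℤ)` (equivalently
`AᵀC`, `BᵀD` symmetric and `AᵀD − CᵀB = I`) and any integer vector `a = (a_X, a_Z) ∈ ℤ^{2n}`,
`(Sa)_Xᵀ (Sa)_Z ≡ a_Xᵀ a_Z + t̄ᵀ a (mod 2)` where `t̄` consists of the diagonal entries of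
`diag(AᵀC, BᵀD)`. -/
theorem symplectic_phase_mod_two (n : ℕ)
    (A B C D : Matrix (Fin n) (Fin n) ℤ)
    (hAC : (Aᵀ * C)ᵀ = Aᵀ * C) (hBD : (Bᵀ * D)ᵀ = Bᵀ * D)
    (hABCD : Aᵀ * D - Cᵀ * B = 1)
    (aX aZ : Fin n → ℤ) :
    (A.mulVec aX + B.mulVec aZ) ⬝ᵥ (C.mulVec aX + D.mulVec aZ) ≡
      aX ⬝ᵥ aZ + ((∑ i, (Aᵀ * C) i i * aX i) + ∑ i, (Bᵀ * D) i i * aZ i) [ZMOD 2] := by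
  open Finset in
  have hAD : Aᵀ * D = 1 + Cᵀ * B := sub_eq_iff_eq_add.mp hABCD
  have h1 : (A.mulVec aX + B.mulVec aZ) ⬝ᵥ (C.mulVec aX + D.mulVec aZ)
      = aX ⬝ᵥ aZ + aX ⬝ᵥ ((Aᵀ * C) *ᵥ aX) + aZ ⬝ᵥ ((Bᵀ * D) *ᵥ aZ)
        + 2 * ((C *ᵥ aX) ⬝ᵥ (B *ᵥ aZ)) := by
    rw [add_dotProduct, dotProduct_add, dotProduct_add,
      dp_helper A C, dp_helper A D, dp_helper B C, dp_helper B D, hAD]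
    rw [add_mulVec, one_mulVec, dotProduct_add]
    have h2 : aX ⬝ᵥ ((Cᵀ * B) *ᵥ aZ) = (C *ᵥ aX) ⬝ᵥ (B *ᵥ aZ) := (dp_helper C B aX aZ).symm
    have h3 : aZ ⬝ᵥ ((Bᵀ * C) *ᵥ aX) = (C *ᵥ aX) ⬝ᵥ (B *ᵥ aZ) := by
      rw [← dp_helper B C, dotProduct_comm]
    rw [h2, h3]; ring
  rw [h1]
  have hq1 := quad_mod_two (Aᵀ * C) hAC aX
  have hq2 := quad_mod_two (Bᵀ * D) hBD aZ
  have h2r : 2 * ((C *ᵥ aX) ⬝ᵥ (B *ᵥ aZ)) ≡ 0 [ZMOD 2] :=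
    Int.modEq_zero_iff_dvd.mpr ⟨_, rfl⟩
  calc aX ⬝ᵥ aZ + aX ⬝ᵥ ((Aᵀ * C) *ᵥ aX) + aZ ⬝ᵥ ((Bᵀ * D) *ᵥ aZ)
        + 2 * ((C *ᵥ aX) ⬝ᵥ (B *ᵥ aZ))
      ≡ aX ⬝ᵥ aZ + (∑ i, (Aᵀ * C) i i * aX i) + (∑ i, (Bᵀ * D) i i * aZ i) + 0 [ZMOD 2] :=
        (((Int.ModEq.refl _).add hq1).add hq2).add h2r
    _ = aX ⬝ᵥ aZ + ((∑ i, (Aᵀ * C) i i * aX i) + ∑ i, (Bᵀ * D) i i * aZ i) := by ring
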